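/- Let G = (V,E) be a DAG, let ψ be an r^sin-sequence of G, and let v ∈ ψ. Then the r^sin-enabled reach of v given ψ equals the set of descendants of v not in ψ: reach_{r^sin}(v|ψ) = des(v) ∖ ψ. -/

import Mathlib

universe u

variable {V : Type u}

/-- Acyclicity of an edge relation (DAG condition). -/
def Acyclic (E : V → V → Prop) : Prop := ∀ v : V, ¬ Relation.TransGen E v v

/-- Immediate predecessors of a vertex. -/
def pre (E : V → V → Prop) (v : V) : Set V := {u | E u v}

/-- Immediate successors of a vertex. -/
def suc (E : V → V → Prop) (v : V) : Set V := {u | E v u}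

/-- The reverse DAG edge relation. -/
def Erev (E : V → V → Prop) : V → V → Prop := fun u v => E v u

/-- `r` is a visit rule for the DAG with edge relation `E`. -/
def VisitRule (E : V → V → Prop) (r : V → Set (Set V)) : Prop :=
  ∀ v : V, (r v).Nonempty ∧ ∀ Q ∈ r v, Q ⊆ pre E v

/-- `ψ` is an `r`-sequence. -/
def IsRSeq (r : V → Set (Set V)) (ψ : List V) : Prop :=
  ψ.Nodup ∧ ∀ i : Fin ψ.length, ∃ Q ∈ r (ψ.get i), ∀ u ∈ Q, u ∈ ψ.take i.1

/-- `ψ` is an `r`-visit: an `r`-sequence containing all vertices. -/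
def IsRVisit (r : V → Set (Set V)) (ψ : List V) : Prop :=
  IsRSeq r ψ ∧ ∀ v : V, v ∈ ψ

/-- The `r`-boundary of a sequence. -/
def boundary (r : V → Set (Set V)) (ψ : List V) : Set V :=
  {v | v ∉ ψ ∧ ∃ Q ∈ r v, Q ≠ (∅ : Set V) ∧ ∀ u ∈ Q, u ∈ ψ}

/-- The `r`-boundary complexity of a sequence. -/
noncomputable def bnd (r : V → Set (Set V)) (ψ : List V) : ℕ :=
  (Finset.Icc 1 ψ.length).sup fun i => (boundary r (ψ.take i)).ncard

/-- The singleton visit rule. -/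
def rsin (E : V → V → Prop) : V → Set (Set V) := fun v =>
  {Q | (pre E v = ∅ ∧ Q = ∅) ∨ ∃ u ∈ pre E v, Q = {u}}

/-- Descendants of a vertex. -/
def des (E : V → V → Prop) (v : V) : Set V := {u | Relation.TransGen E v u}

/-- The `r`-enabled reach of `v` given the `r`-sequence `ψ`. -/
def reach (E : V → V → Prop) (r : V → Set (Set V)) (v : V) (ψ : List V) : Set V :=
  {u | ∃ ψ' : List V, (∀ x ∈ ψ' ++ [u], x ∈ des E v) ∧ IsRSeq r (ψ ++ (ψ' ++ [u]))}

lemma isRSeq_append_left {r : V → Set (Set V)} {a b : List V}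
    (h : IsRSeq r (a ++ b)) : IsRSeq r a := by
  obtain ⟨hnd, hseq⟩ := h
  refine ⟨hnd.of_append_left, fun i => ?_⟩
  have hi : (i : ℕ) < (a ++ b).length := by simp; omega
  obtain ⟨Q, hQ, hQ'⟩ := hseq ⟨i, hi⟩
  refine ⟨Q, ?_, fun u hu => ?_⟩
  · simpa [List.get_eq_getElem, List.getElem_append_left] using hQ
  · have := hQ' u hu
    rwa [List.take_append_of_le_length (le_of_lt i.2)] at this

lemma isRSeq_snoc (E : V → V → Prop) {χ : List V} (h : IsRSeq (rsin E) χ) {w u : V}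
    (hw : w ∈ χ) (hE : E w u) (hu : u ∉ χ) : IsRSeq (rsin E) (χ ++ [u]) := by
  obtain ⟨hnd, hseq⟩ := h
  constructor
  · simp [List.nodup_append, hnd, hu]; intro a ha h; exact hu (h ▸ ha)
  · intro i
    have hi : (i : ℕ) < χ.length + 1 := by simpa using i.2
    rcases lt_or_eq_of_le (Nat.lt_succ_iff.mp hi) with hlt | heq
    · obtain ⟨Q, hQ, hQ'⟩ := hseq ⟨i, hlt⟩
      have hg : (χ ++ [u]).get i = χ.get ⟨i, hlt⟩ := by
        simp [List.get_eq_getElem, List.getElem_append_left hlt]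
      rw [hg]
      refine ⟨Q, hQ, fun x hx => ?_⟩
      rw [List.take_append_of_le_length (le_of_lt hlt)]; exact hQ' x hx
    · have hg : (χ ++ [u]).get i = u := by
        simp [List.get_eq_getElem, heq]
      rw [hg]
      refine ⟨{w}, Or.inr ⟨w, hE, rfl⟩, fun x hx => ?_⟩
      simp only [Set.mem_singleton_iff] at hx; subst hx
      rw [heq, List.take_append_of_le_length le_rfl, List.take_length]
      exact hw

lemma main_lemma (E : V → V → Prop) {ψ : List V} (hψ : IsRSeq (rsin E) ψ)
    {v : V} (hv : v ∈ ψ) {u : V} (hu : Relation.TransGen E v u) :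
    ∃ χ : List V, ψ <+: χ ∧ IsRSeq (rsin E) χ ∧ u ∈ χ ∧
      ∀ x ∈ χ, x ∉ ψ → x ∈ des E v := by
  induction hu with
  | @single b h =>
    by_cases hmem : b ∈ ψ
    · exact ⟨ψ, List.prefix_refl _, hψ, hmem, fun x hx hx' => absurd hx hx'⟩
    · refine ⟨ψ ++ [b], ⟨[b], rfl⟩, isRSeq_snoc E hψ hv h hmem, by simp, ?_⟩
      intro x hx hx'
      simp [hx'] at hx
      subst hx
      exact Relation.TransGen.single h
  | @tail w u' htg hE ih =>
    obtain ⟨χ, hpre, hseq, hwmem, hdes⟩ := ih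
    by_cases hmem : u' ∈ χ
    · refine ⟨χ, hpre, hseq, hmem, hdes⟩
    · refine ⟨χ ++ [u'], hpre.trans ⟨[u'], rfl⟩, isRSeq_snoc E hseq hwmem hE hmem, by simp, ?_⟩
      intro x hx hx'
      rcases List.mem_append.mp hx with h1 | h1
      · exact hdes x h1 hx'
      · simp at h1; subst h1
        exact htg.tail hE

theorem stmt_12 {V : Type u} [Fintype V] [DecidableEq V] (E : V → V → Prop) (hG : Acyclic E)
    (ψ : List V) (hψ : IsRSeq (rsin E) ψ) (v : V) (hv : v ∈ ψ) :
    reach E (rsin E) v ψ = des E v \ {x | x ∈ ψ} := by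
  ext u
  constructor
  · rintro ⟨ψ', hdes, hseq⟩
    refine ⟨hdes u (by simp), ?_⟩
    intro humem
    have hnd := hseq.1
    rw [List.nodup_append] at hnd
    exact hnd.2.2 u humem u (by simp) rfl
  · rintro ⟨hudes, humem⟩
    simp only [Set.mem_setOf_eq] at humem
    obtain ⟨χ, ⟨t, ht⟩, hseq, humemχ, hdes⟩ := main_lemma E hψ hv hudes
    subst ht
    have hut : u ∈ t := by
      rcases List.mem_append.mp humemχ with h | h
      · exact absurd h humem
      · exact h
    obtain ⟨t1, t2, rfl⟩ := List.append_of_mem hut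
    refine ⟨t1, ?_, ?_⟩
    · intro x hx
      have hxχ : x ∈ ψ ++ (t1 ++ u :: t2) := by
        rcases List.mem_append.mp hx with h | h
        · simp [h]
        · simp at h; subst h; simp
      refine hdes x hxχ ?_
      intro hxψ
      have hnd := hseq.1
      rw [List.nodup_append] at hnd
      exact hnd.2.2 x hxψ x (by
        rcases List.mem_append.mp hx with h | h
        · simp [h]
        · simp at h; subst h; simp) rfl
    · have : ψ ++ (t1 ++ u :: t2) = (ψ ++ (t1 ++ [u])) ++ t2 := by simp
      rw [this] at hseq
      exact isRSeq_append_left hseq
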